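/- arXiv:1212.4306 — 11 statements merged into one kernel-verified Lean document; each statement's English description precedes it below -/
import Mathlib

section
/- Let G be a finite group and b(G) the size of the largest conjugacy class of G. Then Pr(G) ≥ (1/b(G))·(1 + (b(G) - 1)/|G : Z(G)|), where Pr(G) is the commuting probability of G. -/
/-- The commuting probability of a finite group. -/
noncomputable def commProb' (G : Type*) [Group G] : ℚ :=
  (Nat.card {p : G × G // p.1 * p.2 = p.2 * p.1} : ℚ) / (Nat.card G : ℚ) ^ 2

/-- The size of the largest conjugacy class. -/
noncomputable def bG (G : Type*) [Group G] [Fintype G] : ℕ :=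
  Finset.univ.sup fun x : G => Nat.card {z : G // IsConj x z}

theorem stmt_3 {G : Type*} [Group G] [Fintype G] :
    commProb' G ≥
      (1 / (bG G : ℚ)) * (1 + ((bG G : ℚ) - 1) / ((Subgroup.center G).index : ℚ)) := by
  classical
  -- carrier cards are bounded by bG
  have hcarrier : ∀ c : ConjClasses G, c.carrier.toFinset.card ≤ bG G := by
    intro c
    obtain ⟨x, rfl⟩ := c.exists_rep
    have hset : (ConjClasses.mk x).carrier.toFinset.card
        = Nat.card {z : G // IsConj x z} := by
      rw [Set.toFinset_card, Nat.card_eq_fintype_card]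
      apply Fintype.card_congr
      apply Equiv.subtypeEquivRight
      intro z
      rw [ConjClasses.mem_carrier_iff_mk_eq, eq_comm, ConjClasses.mk_eq_mk_iff_isConj]
    rw [hset]
    exact Finset.le_sup (f := fun x : G => Nat.card {z : G // IsConj x z})
      (Finset.mem_univ x)
  -- bG ≥ 1
  have hb1 : 1 ≤ bG G := by
    have h0 : Nonempty {z : G // IsConj (1 : G) z} := ⟨⟨1, IsConj.refl 1⟩⟩
    have : 0 < Nat.card {z : G // IsConj (1 : G) z} := Nat.card_pos
    exact le_trans this (Finset.le_sup (f := fun x : G => Nat.card {z : G // IsConj x z})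
      (Finset.mem_univ (1 : G)))
  -- class count: |noncenter| + |Z| = |ConjClasses|
  have hzk : (ConjClasses.noncenter G).toFinset.card + Fintype.card (Subgroup.center G)
      = Fintype.card (ConjClasses G) := by
    have h1 : Fintype.card (Subgroup.center G)
        = Fintype.card ((ConjClasses.noncenter G)ᶜ : Set (ConjClasses G)) :=
      Fintype.card_congr ((ConjClasses.mk_bijOn G).equiv _)
    rw [h1, ← Set.toFinset_card, Set.toFinset_compl, Finset.card_compl]
    have := Finset.card_le_univ (ConjClasses.noncenter G).toFinset
    omega
  -- key nat inequality
  have hkey : Fintype.card G + Fintype.card (Subgroup.center G) * bG G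
      ≤ Fintype.card (ConjClasses G) * bG G + Fintype.card (Subgroup.center G) := by
    have hce := Group.card_center_add_sum_card_noncenter_eq_card G
    have hsum : ∑ c ∈ (ConjClasses.noncenter G).toFinset, c.carrier.toFinset.card
        ≤ (ConjClasses.noncenter G).toFinset.card * bG G := by
      calc ∑ c ∈ (ConjClasses.noncenter G).toFinset, c.carrier.toFinset.card
          ≤ ∑ _c ∈ (ConjClasses.noncenter G).toFinset, bG G :=
            Finset.sum_le_sum fun c _ => hcarrier c
        _ = (ConjClasses.noncenter G).toFinset.card * bG G := by
            rw [Finset.sum_const, smul_eq_mul]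
    nlinarith [hce, hsum, hzk]
  -- commProb' G = |ConjClasses| / |G|
  have hcp : commProb' G
      = (Fintype.card (ConjClasses G) : ℚ) / (Fintype.card G : ℚ) := by
    have h : Nat.card {p : G × G // p.1 * p.2 = p.2 * p.1}
        = Nat.card (ConjClasses G) * Nat.card G :=
      card_comm_eq_card_conjClasses_mul_card G
    rw [commProb', h, Nat.card_eq_fintype_card, Nat.card_eq_fintype_card]
    have hn : (Fintype.card G : ℚ) ≠ 0 := by
      exact_mod_cast Fintype.card_ne_zero
    field_simp
    push_cast
    ring
  -- index relation
  have hin : (Nat.card (Subgroup.center G) : ℚ) * ((Subgroup.center G).index : ℚ)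
      = (Fintype.card G : ℚ) := by
    rw [← Nat.card_eq_fintype_card]
    exact_mod_cast Subgroup.card_mul_index (Subgroup.center G)
  -- positivity facts
  have hn : (0 : ℚ) < Fintype.card G := by exact_mod_cast Fintype.card_pos
  have hz : (0 : ℚ) < Nat.card (Subgroup.center G) := by
    exact_mod_cast Nat.card_pos
  have hbq : (1 : ℚ) ≤ (bG G : ℚ) := by exact_mod_cast hb1
  have hbpos : (0 : ℚ) < (bG G : ℚ) := lt_of_lt_of_le one_pos hbq
  have hidx : (0 : ℚ) < ((Subgroup.center G).index : ℚ) := by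
    have : (Subgroup.center G).index ≠ 0 := Subgroup.index_ne_zero_of_finite
    exact_mod_cast Nat.pos_of_ne_zero this
  have hidx_eq : ((Subgroup.center G).index : ℚ)
      = (Fintype.card G : ℚ) / (Nat.card (Subgroup.center G) : ℚ) := by
    rw [eq_div_iff (ne_of_gt hz)]
    linarith [hin]
  have hkeyq : (Fintype.card G : ℚ) + (Nat.card (Subgroup.center G) : ℚ) * (bG G : ℚ)
      ≤ (Fintype.card (ConjClasses G) : ℚ) * (bG G : ℚ)
        + (Nat.card (Subgroup.center G) : ℚ) := by
    rw [Nat.card_eq_fintype_card]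
    exact_mod_cast hkey
  rw [ge_iff_le, hcp]
  calc 1 / (bG G : ℚ) * (1 + ((bG G : ℚ) - 1) / ((Subgroup.center G).index : ℚ))
      = ((Fintype.card G : ℚ) + ((bG G : ℚ) - 1) * (Nat.card (Subgroup.center G) : ℚ))
        / ((bG G : ℚ) * (Fintype.card G : ℚ)) := by
        rw [hidx_eq]
        field_simp
    _ ≤ (Fintype.card (ConjClasses G) : ℚ) / (Fintype.card G : ℚ) := by
        rw [div_le_div_iff₀ (by positivity) hn]
        nlinarith [hkeyq, hn]
end

section
/- Let G be a finite group with b(G) its largest conjugacy class size. Then Pr(G) = (1/b(G))·(1 + (b(G)-1)/|G : Z(G)|) if and only if |x^G| = b(G) for all x ∈ G \ Z(G). -/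
open Finset

section Aux

variable {G : Type*} [Group G] [Fintype G]

omit [Fintype G] in
private lemma cl_mul_comm (x : G) :
    Nat.card {z : G // IsConj x z} * Nat.card {y : G // x * y = y * x} = Nat.card G := by
  classical
  have e1 : {z : G // IsConj x z} ≃ MulAction.orbit (ConjAct G) x :=
    Equiv.subtypeEquivRight fun z => by
      rw [ConjAct.mem_orbit_conjAct]; exact isConj_comm
  have e2 : {y : G // x * y = y * x} ≃ MulAction.stabilizer (ConjAct G) x := by
    refine ⟨fun y => ⟨ConjAct.toConjAct y.1, ?_⟩,
      fun g => ⟨ConjAct.ofConjAct g.1, ?_⟩, fun y => rfl, fun g => rfl⟩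
    · rw [MulAction.mem_stabilizer_iff, ConjAct.toConjAct_smul, ← y.2, mul_inv_cancel_right]
    · have h := g.2
      rw [MulAction.mem_stabilizer_iff, ConjAct.smul_def] at h
      exact (mul_inv_eq_iff_eq_mul.mp h).symm
  calc Nat.card {z : G // IsConj x z} * Nat.card {y : G // x * y = y * x}
      = Nat.card (MulAction.orbit (ConjAct G) x × MulAction.stabilizer (ConjAct G) x) := by
        rw [Nat.card_prod, Nat.card_congr e1, Nat.card_congr e2]
    _ = Nat.card (ConjAct G) :=
        Nat.card_congr (MulAction.orbitProdStabilizerEquivGroup (ConjAct G) x)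
    _ = Nat.card G := rfl

private lemma comm_pos (x : G) : 0 < Nat.card {y : G // x * y = y * x} := by
  haveI : Nonempty {y : G // x * y = y * x} := ⟨⟨1, by simp⟩⟩
  exact Nat.card_pos

private lemma cl_pos (x : G) : 0 < Nat.card {z : G // IsConj x z} := by
  haveI : Nonempty {z : G // IsConj x z} := ⟨⟨x, IsConj.refl x⟩⟩
  exact Nat.card_pos

private lemma cl_le_b (x : G) : Nat.card {z : G // IsConj x z} ≤ bG G := by
  exact Finset.le_sup (f := fun x : G => Nat.card {z : G // IsConj x z}) (mem_univ x)

private lemma b_pos : 0 < bG G := lt_of_lt_of_le (cl_pos 1) (cl_le_b 1)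

omit [Fintype G] in
private lemma central_comm {x : G} (hx : x ∈ Subgroup.center G) :
    Nat.card {y : G // x * y = y * x} = Nat.card G :=
  Nat.card_congr (Equiv.subtypeUnivEquiv fun y => (Subgroup.mem_center_iff.mp hx y).symm)

private lemma pairs_eq :
    Nat.card {p : G × G // p.1 * p.2 = p.2 * p.1} =
      ∑ x : G, Nat.card {y : G // x * y = y * x} := by
  classical
  simp_rw [Nat.card_eq_fintype_card]
  rw [Fintype.card_congr (Equiv.subtypeProdEquivSigmaSubtype fun a b : G => a * b = b * a)]
  exact Fintype.card_sigma

end Aux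

theorem stmt_5 {G : Type*} [Group G] [Fintype G] :
    commProb' G =
        (1 / (bG G : ℚ)) * (1 + ((bG G : ℚ) - 1) / ((Subgroup.center G).index : ℚ)) ↔
      ∀ x : G, x ∉ Subgroup.center G → Nat.card {z : G // IsConj x z} = bG G := by
  classical
  set b := bG G with hbdef
  have hb1 : 1 ≤ b := b_pos
  set N := Nat.card G with hNdef
  have hN : 0 < N := Nat.card_pos
  set Z := Nat.card (Subgroup.center G) with hZdef
  have hZ : 0 < Z := Nat.card_pos
  have hι : (Subgroup.center G).index * Z = N := Subgroup.index_mul_card _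
  have hNQ : (N : ℚ) ≠ 0 := Nat.cast_ne_zero.mpr hN.ne'
  have hZQ : (Z : ℚ) ≠ 0 := Nat.cast_ne_zero.mpr hZ.ne'
  have hbQ : (b : ℚ) ≠ 0 := Nat.cast_ne_zero.mpr b_pos.ne'
  have hιQ : ((Subgroup.center G).index : ℚ) = (N : ℚ) / (Z : ℚ) := by
    rw [eq_div_iff hZQ]
    exact_mod_cast hι
  set S := ∑ x : G, Nat.card {y : G // x * y = y * x} with hSdef
  have hcp : commProb' G = (S : ℚ) / (N : ℚ) ^ 2 := by
    rw [commProb', pairs_eq, hSdef, hNdef]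
  have hRHS : (1 / (b : ℚ)) * (1 + ((b : ℚ) - 1) / ((Subgroup.center G).index : ℚ)) =
      ((N + (b - 1) * Z : ℕ) : ℚ) / ((b * N : ℕ) : ℚ) := by
    rw [hιQ]
    push_cast [Nat.cast_sub hb1]
    field_simp
  have key : (commProb' G =
      (1 / (b : ℚ)) * (1 + ((b : ℚ) - 1) / ((Subgroup.center G).index : ℚ))) ↔
      S * (b * N) = (N + (b - 1) * Z) * N ^ 2 := by
    rw [hcp, hRHS, div_eq_div_iff (by positivity) (by positivity)]
    exact_mod_cast Iff.rfl
  rw [key]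
  have hcancel : S * (b * N) = (N + (b - 1) * Z) * N ^ 2 ↔
      S * b = (N + (b - 1) * Z) * N := by
    rw [show S * (b * N) = S * b * N by ring, show (N + (b - 1) * Z) * N ^ 2 =
      (N + (b - 1) * Z) * N * N by ring, Nat.mul_left_inj hN.ne']
  rw [hcancel]
  have hsum_left : S * b = ∑ x : G, Nat.card {y : G // x * y = y * x} * b :=
    Finset.sum_mul ..
  have hZfilter : Z = (univ.filter (fun x : G => x ∈ Subgroup.center G)).card := by
    rw [hZdef, Nat.card_eq_fintype_card]
    exact Fintype.card_subtype _
  have hsum_right : (N + (b - 1) * Z) * N =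
      ∑ x : G, (N + if x ∈ Subgroup.center G then (b - 1) * N else 0) := by
    rw [Finset.sum_add_distrib, Finset.sum_const, ← Finset.sum_filter, Finset.sum_const,
      ← hZfilter, smul_eq_mul, smul_eq_mul, Finset.card_univ, ← Nat.card_eq_fintype_card,
      ← hNdef]
    ring
  rw [hsum_left, hsum_right, eq_comm]
  have hle : ∀ x : G, x ∈ (univ : Finset G) →
      (N + if x ∈ Subgroup.center G then (b - 1) * N else 0) ≤
        Nat.card {y : G // x * y = y * x} * b := by
    intro x _
    by_cases hx : x ∈ Subgroup.center G
    · rw [if_pos hx, central_comm hx, ← hNdef]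
      have h : N + (b - 1) * N = (1 + (b - 1)) * N := by ring
      rw [h, show 1 + (b - 1) = b by omega, mul_comm]
    · rw [if_neg hx, add_zero]
      calc N = Nat.card {z : G // IsConj x z} * Nat.card {y : G // x * y = y * x} := by
            rw [cl_mul_comm, hNdef]
        _ ≤ b * Nat.card {y : G // x * y = y * x} :=
            Nat.mul_le_mul_right _ (cl_le_b x)
        _ = Nat.card {y : G // x * y = y * x} * b := mul_comm _ _
  rw [Finset.sum_eq_sum_iff_of_le hle]
  constructor
  · intro H x hx
    have h1 := H x (mem_univ x)
    rw [if_neg hx, add_zero] at h1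
    have h2 : Nat.card {z : G // IsConj x z} * Nat.card {y : G // x * y = y * x} = N := by
      rw [cl_mul_comm, hNdef]
    have h3 : Nat.card {y : G // x * y = y * x} * Nat.card {z : G // IsConj x z} =
        Nat.card {y : G // x * y = y * x} * b := by
      rw [mul_comm, h2, h1, mul_comm]
    exact Nat.eq_of_mul_eq_mul_left (comm_pos x) h3
  · intro H x _
    by_cases hx : x ∈ Subgroup.center G
    · rw [if_pos hx, central_comm hx, ← hNdef]
      have h : N + (b - 1) * N = (1 + (b - 1)) * N := by ring
      rw [h, show 1 + (b - 1) = b by omega, mul_comm]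
    · rw [if_neg hx, add_zero, ← H x hx, mul_comm, cl_mul_comm, hNdef]
end

section
/- Let G and H be isoclinic finite groups with isoclinism (α, β). Then for every g ∈ γ₂(G), Pr_g(G) = Pr_{β(g)}(H). -/
lemma mem_commutator_of {G : Type*} [Group G] (x y : G) :
    x⁻¹ * y⁻¹ * x * y ∈ commutator G := by
  have h := Subgroup.commutator_mem_commutator (Subgroup.mem_top x⁻¹) (Subgroup.mem_top y⁻¹)
  show x⁻¹ * y⁻¹ * x * y ∈ ⁅(⊤ : Subgroup G), ⊤⁆
  simpa [commutatorElement_def, mul_assoc] using h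

/-- An isoclinism between two groups. -/
structure Isoclinism (G H : Type*) [Group G] [Group H] where
  α : (G ⧸ Subgroup.center G) ≃* (H ⧸ Subgroup.center H)
  β : (commutator G) ≃* (commutator H)
  compat : ∀ (x y : G) (x' y' : H),
    α (x : G ⧸ Subgroup.center G) = (x' : H ⧸ Subgroup.center H) →
    α (y : G ⧸ Subgroup.center G) = (y' : H ⧸ Subgroup.center H) →
    (β ⟨x⁻¹ * y⁻¹ * x * y, mem_commutator_of x y⟩ : H) = x'⁻¹ * y'⁻¹ * x' * y'

/-- Probability that a pair of elements has commutator equal to `g`. -/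
noncomputable def Prg (G : Type*) [Group G] (g : G) : ℚ :=
  (Nat.card {p : G × G // p.1⁻¹ * p.2⁻¹ * p.1 * p.2 = g} : ℚ) / (Nat.card G : ℚ) ^ 2

section
variable {G : Type*} [Group G]

private def kf (x y : G) : G := x⁻¹ * y⁻¹ * x * y

private lemma kf_congr {x x' y y' : G} (hx : (x : G ⧸ Subgroup.center G) = x')
    (hy : (y : G ⧸ Subgroup.center G) = y') : kf x y = kf x' y' := by
  obtain ⟨z, hz, rfl⟩ : ∃ z ∈ Subgroup.center G, x' = x * z :=
    ⟨x⁻¹ * x', QuotientGroup.eq.mp hx, by group⟩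
  obtain ⟨w, hw, rfl⟩ : ∃ w ∈ Subgroup.center G, y' = y * w :=
    ⟨y⁻¹ * y', QuotientGroup.eq.mp hy, by group⟩
  have hz' := Subgroup.mem_center_iff.mp hz
  have hw' := Subgroup.mem_center_iff.mp hw
  unfold kf
  symm
  have h1 : (x * z)⁻¹ * (y * w)⁻¹ * (x * z) * (y * w)
      = z⁻¹ * ((x⁻¹ * w⁻¹ * y⁻¹ * x) * z) * (y * w) := by group
  rw [h1, hz' (x⁻¹ * w⁻¹ * y⁻¹ * x)]
  have h2 : z⁻¹ * (z * (x⁻¹ * w⁻¹ * y⁻¹ * x)) * (y * w)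
      = x⁻¹ * (w⁻¹ * (y⁻¹ * x * y * w)) := by group
  rw [h2, hw' (y⁻¹ * x * y)]
  group

variable (G) in
private noncomputable def kbar
    (q : (G ⧸ Subgroup.center G) × (G ⧸ Subgroup.center G)) : G :=
  kf q.1.out q.2.out

private lemma kbar_mk (x y : G) :
    kbar G ((x : G ⧸ Subgroup.center G), (y : G ⧸ Subgroup.center G)) = kf x y :=
  kf_congr (QuotientGroup.out_eq' _) (QuotientGroup.out_eq' _)

private noncomputable def countEquiv (g : G) :
    {p : G × G // p.1⁻¹ * p.2⁻¹ * p.1 * p.2 = g} ≃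
      {q : (G ⧸ Subgroup.center G) × (G ⧸ Subgroup.center G) // kbar G q = g} ×
        (Subgroup.center G × Subgroup.center G) where
  toFun p :=
    (⟨((p.1.1 : G ⧸ Subgroup.center G), (p.1.2 : G ⧸ Subgroup.center G)), by
        rw [kbar_mk]; exact p.2⟩,
      ⟨(p.1.1 : G ⧸ Subgroup.center G).out⁻¹ * p.1.1,
        QuotientGroup.eq.mp (QuotientGroup.out_eq' _)⟩,
      ⟨(p.1.2 : G ⧸ Subgroup.center G).out⁻¹ * p.1.2,
        QuotientGroup.eq.mp (QuotientGroup.out_eq' _)⟩)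
  invFun t :=
    ⟨(t.1.1.1.out * (t.2.1 : G), t.1.1.2.out * (t.2.2 : G)), by
      have h1 : ((t.1.1.1.out : G) : G ⧸ Subgroup.center G)
          = ((t.1.1.1.out * (t.2.1 : G) : G) : G ⧸ Subgroup.center G) :=
        QuotientGroup.eq.mpr (by simpa using t.2.1.2)
      have h2 : ((t.1.1.2.out : G) : G ⧸ Subgroup.center G)
          = ((t.1.1.2.out * (t.2.2 : G) : G) : G ⧸ Subgroup.center G) :=
        QuotientGroup.eq.mpr (by simpa using t.2.2.2)
      have := (kf_congr h1 h2).symm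
      rw [show kf t.1.1.1.out t.1.1.2.out = kbar G t.1.1 from rfl, t.1.2] at this
      exact this⟩
  left_inv p := by
    apply Subtype.ext
    simp
  right_inv t := by
    obtain ⟨⟨⟨q1, q2⟩, hq⟩, ⟨z, hz⟩, ⟨w, hw⟩⟩ := t
    have e1 : ((q1.out * z : G) : G ⧸ Subgroup.center G) = q1 := by
      rw [QuotientGroup.mk_mul_of_mem _ hz, QuotientGroup.out_eq']
    have e2 : ((q2.out * w : G) : G ⧸ Subgroup.center G) = q2 := by
      rw [QuotientGroup.mk_mul_of_mem _ hw, QuotientGroup.out_eq']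
    refine Prod.ext (Subtype.ext (Prod.ext e1 e2)) (Prod.ext ?_ ?_) <;>
      · apply Subtype.ext
        simp only [e1, e2]
        group

end

private lemma kbar_mem {G : Type*} [Group G]
    (q : (G ⧸ Subgroup.center G) × (G ⧸ Subgroup.center G)) :
    kbar G q ∈ commutator G := mem_commutator_of _ _

private noncomputable def qEquiv {G H : Type*} [Group G] [Group H]
    (I : Isoclinism G H) (g : commutator G) :
    {q : (G ⧸ Subgroup.center G) × (G ⧸ Subgroup.center G) // kbar G q = (g : G)} ≃
      {q : (H ⧸ Subgroup.center H) × (H ⧸ Subgroup.center H) //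
        kbar H q = ((I.β g : commutator H) : H)} := by
  refine Equiv.subtypeEquiv (Equiv.prodCongr I.α.toEquiv I.α.toEquiv) (fun q => ?_)
  set x := q.1.out with hx
  set y := q.2.out with hy
  set x' := (I.α q.1).out with hx'
  set y' := (I.α q.2).out with hy'
  have h1 : I.α (x : G ⧸ Subgroup.center G) = (x' : H ⧸ Subgroup.center H) := by
    rw [hx, hx', QuotientGroup.out_eq', QuotientGroup.out_eq']
  have h2 : I.α (y : G ⧸ Subgroup.center G) = (y' : H ⧸ Subgroup.center H) := by
    rw [hy, hy', QuotientGroup.out_eq', QuotientGroup.out_eq']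
  have key := I.compat x y x' y' h1 h2
  have hkG : kbar G q = kf x y := rfl
  have hkH : kbar H ((Equiv.prodCongr I.α.toEquiv I.α.toEquiv) q)
      = kf x' y' := rfl
  rw [hkG, hkH]
  constructor
  · intro h
    have : (⟨kf x y, mem_commutator_of x y⟩ : commutator G) = g := Subtype.ext h
    rw [← this]
    exact key.symm
  · intro h
    have : (I.β ⟨kf x y, mem_commutator_of x y⟩ : H) = ((I.β g : commutator H) : H) :=
      key.trans h
    have h2 : I.β ⟨kf x y, mem_commutator_of x y⟩ = I.β g := Subtype.ext this
    have h3 : (⟨kf x y, mem_commutator_of x y⟩ : commutator G) = g := I.β.injective h2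
    exact congrArg Subtype.val h3

private lemma Prg_eq {G : Type*} [Group G] [Finite G] (g : G) :
    Prg G g = (Nat.card {q : (G ⧸ Subgroup.center G) × (G ⧸ Subgroup.center G) //
        kbar G q = g} : ℚ) / (Nat.card (G ⧸ Subgroup.center G) : ℚ) ^ 2 := by
  have hcard : Nat.card G
      = Nat.card (G ⧸ Subgroup.center G) * Nat.card (Subgroup.center G) :=
    Subgroup.card_eq_card_quotient_mul_card_subgroup _
  have hne : Nat.card {p : G × G // p.1⁻¹ * p.2⁻¹ * p.1 * p.2 = g}
      = Nat.card {q : (G ⧸ Subgroup.center G) × (G ⧸ Subgroup.center G) // kbar G q = g}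
        * (Nat.card (Subgroup.center G) * Nat.card (Subgroup.center G)) := by
    rw [Nat.card_congr (countEquiv g), Nat.card_prod, Nat.card_prod]
  have hz : (0 : ℚ) < (Nat.card (Subgroup.center G) : ℚ) := by
    exact_mod_cast Nat.card_pos
  have hq : (0 : ℚ) < (Nat.card (G ⧸ Subgroup.center G) : ℚ) := by
    exact_mod_cast Nat.card_pos
  rw [Prg, hne, hcard]
  push_cast
  field_simp

theorem stmt_7 {G H : Type*} [Group G] [Group H] [Finite G] [Finite H]
    (I : Isoclinism G H) (g : commutator G) :
    Prg G (g : G) = Prg H ((I.β g : commutator H) : H) := by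
  rw [Prg_eq, Prg_eq, Nat.card_congr (qEquiv I g),
    Nat.card_congr I.α.toEquiv]
end

section
/- Let H be a finite Camina p-group of nilpotency class 2 with |γ₂(H)| = p^r and |H : Z(H)| = p^{2m}. Then for the identity element, Pr_1(H) = (1/p^r)(1 + (p^r - 1)/p^{2m}), and for every nonidentity commutator h ∈ K(H), Pr_h(H) = (1/p^r)(1 - 1/p^{2m}). -/
/-- A finite group is a Camina group if `x^G = x·γ₂(G)` for every `x ∉ γ₂(G)`. -/
def IsCamina (G : Type*) [Group G] : Prop :=
  ∀ x : G, x ∉ commutator G → {z : G | IsConj x z} = (fun c => x * c) '' (commutator G : Set G)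


open scoped commutatorElement in
lemma aux_mem_commutator {H : Type*} [Group H] (a b : H) :
    a⁻¹ * b⁻¹ * a * b ∈ commutator H := by
  have h : a⁻¹*b⁻¹*a*b = ⁅a⁻¹, b⁻¹⁆ := by rw [commutatorElement_def]; group
  rw [h, commutator_def]
  exact Subgroup.commutator_mem_commutator (Subgroup.mem_top _) (Subgroup.mem_top _)

def phiAux {H : Type*} [Group H] (hcle : commutator H ≤ Subgroup.center H) (x : H) :
    H →* H where
  toFun y := x⁻¹ * y⁻¹ * x * y
  map_one' := by group
  map_mul' y z := by
    have h1 := Subgroup.mem_center_iff.mp (hcle (aux_mem_commutator x y))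
    show x⁻¹ * (y*z)⁻¹ * x * (y*z) = (x⁻¹*y⁻¹*x*y) * (x⁻¹*z⁻¹*x*z)
    calc x⁻¹ * (y*z)⁻¹ * x * (y*z)
        = (x⁻¹ * z⁻¹ * x) * ((x⁻¹*y⁻¹*x*y) * z) := by group
      _ = (x⁻¹ * z⁻¹ * x) * (z * (x⁻¹*y⁻¹*x*y)) := by rw [← h1 z]
      _ = (x⁻¹*z⁻¹*x*z) * (x⁻¹*y⁻¹*x*y) := by group
      _ = (x⁻¹*y⁻¹*x*y) * (x⁻¹*z⁻¹*x*z) := h1 _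

@[simp] lemma phiAux_apply {H : Type*} [Group H] (hcle : commutator H ≤ Subgroup.center H)
    (x y : H) : phiAux hcle x y = x⁻¹ * y⁻¹ * x * y := rfl

lemma phi_range {H : Type*} [Group H] (hCam : IsCamina H)
    (hcle : commutator H ≤ Subgroup.center H) (x : H) (hx : x ∉ commutator H) :
    (phiAux hcle x).range = commutator H := by
  ext w
  constructor
  · rintro ⟨y, rfl⟩
    exact aux_mem_commutator x y
  · intro hw
    have h1 : x * w ∈ {z : H | IsConj x z} := by
      rw [hCam x hx]; exact ⟨w, hw, rfl⟩
    obtain ⟨u, hu⟩ := isConj_iff.mp h1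
    refine ⟨u⁻¹, ?_⟩
    show x⁻¹ * u⁻¹⁻¹ * x * u⁻¹ = w
    rw [inv_inv, show x⁻¹*u*x*u⁻¹ = x⁻¹*(u*x*u⁻¹) by group, hu]
    group

def fiberEquiv {G K : Type*} [Group G] [Group K] (φ : G →* K) (h : K) (y0 : G)
    (hy0 : φ y0 = h) : {y // φ y = h} ≃ φ.ker where
  toFun y := ⟨y0⁻¹ * y.1, by simp [MonoidHom.mem_ker, y.2, hy0]⟩
  invFun k := ⟨y0 * k.1, by
    have hk := k.2
    rw [MonoidHom.mem_ker] at hk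
    simp [hk, hy0]⟩
  left_inv y := by simp
  right_inv k := by simp

theorem stmt_8 {H : Type*} [Group H] [Finite H] (p r m : ℕ) [Fact p.Prime]
    (hp : IsPGroup p H) (hCam : IsCamina H) [Group.IsNilpotent H]
    (hclass : Group.nilpotencyClass H = 2)
    (hγ : Nat.card (commutator H) = p ^ r)
    (hZ : (Subgroup.center H).index = p ^ (2 * m)) :
    Prg H 1 = (1 / (p : ℚ) ^ r) * (1 + ((p : ℚ) ^ r - 1) / (p : ℚ) ^ (2 * m)) ∧
      ∀ h : H, h ≠ 1 → (∃ a b : H, a⁻¹ * b⁻¹ * a * b = h) →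
        Prg H h = (1 / (p : ℚ) ^ r) * (1 - 1 / (p : ℚ) ^ (2 * m)) := by
  classical
  haveI := Fintype.ofFinite H
  have hppos : 0 < p := (Fact.out : p.Prime).pos
  -- class-2 structure
  have hlcs2 : (⊤ : Subgroup H).lowerCentralSeries 2 = ⊥ :=
    lowerCentralSeries_eq_bot_iff_nilpotencyClass_le.mpr hclass.le
  have hcle : commutator H ≤ Subgroup.center H := by
    have hb : ⁅commutator H, (⊤ : Subgroup H)⁆ = ⊥ := hlcs2
    have h2 := Subgroup.commutator_eq_bot_iff_le_centralizer.mp hb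
    simpa [Subgroup.coe_top, Subgroup.centralizer_univ] using h2
  have hnontriv : commutator H ≠ ⊥ := by
    intro hbot
    have h1 : Group.nilpotencyClass H ≤ 1 :=
      lowerCentralSeries_eq_bot_iff_nilpotencyClass_le.mp
        (by rw [Subgroup.top_lowerCentralSeries_one]; exact hbot)
    rw [hclass] at h1; omega
  have hzle : Subgroup.center H ≤ commutator H := by
    intro z hz
    by_contra hzc
    obtain ⟨c, hc, hcne⟩ := Subgroup.nontrivial_iff_exists_ne_one (commutator H) |>.mp
      (Subgroup.nontrivial_iff_ne_bot (commutator H) |>.mpr hnontriv)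
    have h1 : z * c ∈ {w : H | IsConj z w} := by
      rw [hCam z hzc]; exact ⟨c, hc, rfl⟩
    obtain ⟨u, hu⟩ := isConj_iff.mp h1
    have hz' := Subgroup.mem_center_iff.mp hz u
    have h3 : z * c = z := by
      rw [← hu, hz', mul_assoc, mul_inv_cancel, mul_one]
    exact hcne (mul_eq_left.mp h3)
  have hZeq : Subgroup.center H = commutator H := le_antisymm hzle hcle
  have hcardZ : Nat.card (Subgroup.center H) = p ^ r := by rw [hZeq]; exact hγ
  have hq : Nat.card H = p ^ (2*m) * p ^ r := by
    rw [← Subgroup.index_mul_card (Subgroup.center H), hZ, hcardZ]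
  -- fiber over h for noncentral x
  have hfib : ∀ x : H, x ∉ commutator H → ∀ h : H, h ∈ commutator H →
      Nat.card {y : H // x⁻¹ * y⁻¹ * x * y = h} = p ^ (2*m) := by
    intro x hx h hh
    have hrange := phi_range hCam hcle x hx
    have hmem : h ∈ (phiAux hcle x).range := by rw [hrange]; exact hh
    obtain ⟨y0, hy0⟩ := hmem
    have e1 : Nat.card {y : H // x⁻¹ * y⁻¹ * x * y = h} = Nat.card (phiAux hcle x).ker :=
      Nat.card_congr (fiberEquiv (phiAux hcle x) h y0 hy0)
    have hlag : Nat.card H = Nat.card (H ⧸ (phiAux hcle x).ker) * Nat.card (phiAux hcle x).ker :=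
      Subgroup.card_eq_card_quotient_mul_card_subgroup _
    have hquot : Nat.card (H ⧸ (phiAux hcle x).ker) = p ^ r := by
      rw [Nat.card_congr (QuotientGroup.quotientKerEquivRange (phiAux hcle x)).toEquiv, hrange]
      exact hγ
    rw [hquot, hq] at hlag
    have : p ^ r * Nat.card (phiAux hcle x).ker = p ^ r * p ^ (2*m) := by
      rw [← hlag]; ring
    have hker := Nat.eq_of_mul_eq_mul_left (pow_pos hppos r) this
    rw [e1, hker]
  -- central x
  have hcentral : ∀ x : H, x ∈ commutator H → ∀ y : H, x⁻¹ * y⁻¹ * x * y = 1 := by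
    intro x hx y
    have h1 := Subgroup.mem_center_iff.mp (hcle hx) y⁻¹
    rw [show x⁻¹*y⁻¹*x*y = x⁻¹*(y⁻¹*x)*y by group, h1]
    group
  -- counting decomposition
  have hcount : ∀ g : H, Nat.card {pr : H × H // pr.1⁻¹ * pr.2⁻¹ * pr.1 * pr.2 = g} =
      ∑ x : H, Nat.card {y : H // x⁻¹ * y⁻¹ * x * y = g} := by
    intro g
    rw [Nat.card_congr (Equiv.subtypeProdEquivSigmaSubtype (fun a b : H => a⁻¹*b⁻¹*a*b = g))]
    rw [Nat.card_eq_fintype_card, Fintype.card_sigma]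
    simp [Nat.card_eq_fintype_card]
  -- filter cards
  have hfc : (Finset.univ.filter (fun x : H => x ∈ commutator H)).card = p ^ r := by
    rw [← Fintype.card_subtype, ← Nat.card_eq_fintype_card]
    exact hγ
  have hfcn : (Finset.univ.filter (fun x : H => x ∉ commutator H)).card
      = p ^ (2*m) * p ^ r - p ^ r := by
    have := Finset.card_filter_add_card_filter_not
      (s := (Finset.univ : Finset H)) (p := fun x : H => x ∈ commutator H)
    rw [hfc, Finset.card_univ, ← Nat.card_eq_fintype_card, hq] at this
    omega
  have hle : p ^ r ≤ p ^ (2*m) * p ^ r := Nat.le_mul_of_pos_left _ (pow_pos hppos _)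
  constructor
  · -- g = 1
    have hsum : ∑ x : H, Nat.card {y : H // x⁻¹ * y⁻¹ * x * y = (1 : H)} =
        p ^ r * (p ^ (2*m) * p ^ r) + (p ^ (2*m) * p ^ r - p ^ r) * p ^ (2*m) := by
      rw [Finset.sum_congr rfl (fun x _ => show
          Nat.card {y : H // x⁻¹ * y⁻¹ * x * y = (1 : H)} =
            if x ∈ commutator H then p ^ (2*m) * p ^ r else p ^ (2*m) from ?_)]
      · rw [Finset.sum_ite, Finset.sum_const, Finset.sum_const, smul_eq_mul, smul_eq_mul,
          hfc, hfcn]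
      · by_cases hx : x ∈ commutator H
        · rw [if_pos hx, ← hq]
          rw [Nat.card_congr (Equiv.subtypeUnivEquiv (fun y => hcentral x hx y))]
        · rw [if_neg hx]
          exact hfib x hx 1 (one_mem _)
    rw [Prg, hcount 1, hsum, hq]
    have hp0 : (p : ℚ) ≠ 0 := Nat.cast_ne_zero.mpr hppos.ne'
    push_cast [Nat.cast_sub hle]
    field_simp
    ring
  · -- nonidentity commutator h
    rintro h hne ⟨a, b, rfl⟩
    have hh := aux_mem_commutator a b
    set h := a⁻¹ * b⁻¹ * a * b
    have hsum : ∑ x : H, Nat.card {y : H // x⁻¹ * y⁻¹ * x * y = h} =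
        (p ^ (2*m) * p ^ r - p ^ r) * p ^ (2*m) := by
      rw [Finset.sum_congr rfl (fun x _ => show
          Nat.card {y : H // x⁻¹ * y⁻¹ * x * y = h} =
            if x ∈ commutator H then 0 else p ^ (2*m) from ?_)]
      · rw [Finset.sum_ite, Finset.sum_const, Finset.sum_const, smul_eq_mul, smul_eq_mul,
          hfc, hfcn]
        ring
      · by_cases hx : x ∈ commutator H
        · rw [if_pos hx]
          haveI : IsEmpty {y : H // x⁻¹ * y⁻¹ * x * y = h} :=
            ⟨fun y => hne ((hcentral x hx y.1) ▸ y.2.symm)⟩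
          exact Nat.card_of_isEmpty
        · rw [if_neg hx]
          exact hfib x hx h hh
    rw [Prg, hcount h, hsum, hq]
    have hp0 : (p : ℚ) ≠ 0 := Nat.cast_ne_zero.mpr hppos.ne'
    push_cast [Nat.cast_sub hle]
    field_simp
end

section
/- Let G be a finite non-abelian group such that b(G) = |γ₂(G)| and G has only two conjugacy class sizes 1 and b(G). Then the nilpotency class of G is exactly 2. -/
theorem stmt_11 {G : Type*} [Group G] [Fintype G]
    (hna : ∃ x y : G, x * y ≠ y * x)
    (hb : bG G = Nat.card (commutator G))
    (htwo : ∀ x : G,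
      Nat.card {z : G // IsConj x z} = 1 ∨ Nat.card {z : G // IsConj x z} = bG G) :
    ∃ hn : Group.IsNilpotent G, @Group.nilpotencyClass G _ = 2 := by
  classical
  -- Step 1: the commutator subgroup is central.
  have hcen : commutator G ≤ Subgroup.center G := by
    intro a ha
    by_contra hac
    rw [Subgroup.mem_center_iff] at hac
    push_neg at hac
    obtain ⟨g, hg⟩ := hac
    -- the conjugacy class of a has more than one element
    have hne1 : Nat.card {z : G // IsConj a z} ≠ 1 := by
      intro h1
      rw [Nat.card_eq_one_iff_exists] at h1
      obtain ⟨x, hx⟩ := h1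
      have h1 : (⟨a, IsConj.refl a⟩ : {z : G // IsConj a z}) = x := hx _
      have h2 : (⟨g * a * g⁻¹, isConj_iff.mpr ⟨g, rfl⟩⟩ :
          {z : G // IsConj a z}) = x := hx _
      have heq : g * a * g⁻¹ = a := congrArg Subtype.val (h2.trans h1.symm)
      apply hg
      calc g * a = (g * a * g⁻¹) * g := by group
        _ = a * g := by rw [heq]
    have hcard : Nat.card {z : G // IsConj a z} = Nat.card (commutator G) :=
      (htwo a).resolve_left hne1 |>.trans hb
    -- conjugates of a lie in the commutator subgroup
    have hmem : ∀ z : G, IsConj a z → z ∈ commutator G := by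
      intro z hz
      obtain ⟨c, hc⟩ := isConj_iff.mp hz
      rw [← hc]
      exact (Subgroup.Normal.conj_mem (Subgroup.commutator_normal ⊤ ⊤) a ha c)
    set f : {z : G // IsConj a z} → (commutator G) :=
      fun z => ⟨z.1, hmem z.1 z.2⟩ with hf
    have hinj : Function.Injective f := by
      intro x y hxy
      have : (f x).1 = (f y).1 := congrArg Subtype.val hxy
      exact Subtype.ext this
    have hbij : Function.Bijective f :=
      (Nat.bijective_iff_injective_and_card f).mpr ⟨hinj, hcard⟩
    obtain ⟨z, hz⟩ := hbij.2 ⟨1, Subgroup.one_mem _⟩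
    have hz1 : z.1 = 1 := congrArg Subtype.val hz
    have : a = 1 := isConj_one_left.mp (hz1 ▸ z.2)
    apply hg
    rw [this]; simp
  -- Step 2: lower central series reaches ⊥ at stage 2
  have h2bot : (⊤ : Subgroup G).lowerCentralSeries 2 = ⊥ := by
    have hrfl : (⊤ : Subgroup G).lowerCentralSeries 2 = ⁅commutator G, (⊤ : Subgroup G)⁆ := rfl
    rw [hrfl, Subgroup.commutator_eq_bot_iff_le_centralizer]
    exact hcen.trans (Subgroup.center_le_centralizer _)
  have hn : Group.IsNilpotent G := nilpotent_iff_lowerCentralSeries.mpr ⟨2, h2bot⟩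
  refine ⟨hn, ?_⟩
  have hle : Group.nilpotencyClass G ≤ 2 :=
    lowerCentralSeries_eq_bot_iff_nilpotencyClass_le.mp h2bot
  have hgt : ¬ Group.nilpotencyClass G ≤ 1 := by
    intro h
    have : (⊤ : Subgroup G).lowerCentralSeries 1 = ⊥ :=
      lowerCentralSeries_eq_bot_iff_nilpotencyClass_le.mpr h
    rw [lowerCentralSeries_one] at this
    obtain ⟨x, y, hxy⟩ := hna
    apply hxy
    open scoped commutatorElement in have hmem : ⁅x, y⁆ ∈ commutator G := Subgroup.commutator_mem_commutator trivial trivial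
    rw [this, Subgroup.mem_bot, commutatorElement_eq_one_iff_mul_comm] at hmem
    exact hmem
  omega
end

section
/- Let G be a finite p-group of nilpotency class 2, minimally generated by x₁,…,x_d, with γ₂(G) of exponent p. Let g₁ = Π x_i^{α_i} and g₂ = Π x_j^{β_j} with 0 ≤ α_i, β_j ≤ p−1 and [g₁,g₂] ≠ 1. Then there exists a minimal generating set of G containing both g₁ and g₂. -/
open Subgroup
open scoped commutatorElement

/-- Additive closure vs span over `ZMod p`. -/
lemma addclosure_eq_top_iff_span {p : ℕ} [NeZero p] {M : Type*} [AddCommGroup M]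
    [Module (ZMod p) M] (A : Set M) :
    AddSubgroup.closure A = ⊤ ↔ Submodule.span (ZMod p) A = ⊤ := by
  have h : AddSubgroup.toZModSubmodule p (AddSubgroup.closure A) = Submodule.span (ZMod p) A := by
    apply le_antisymm
    · intro x hx
      rw [AddSubgroup.mem_toZModSubmodule] at hx
      exact (AddSubgroup.closure_le ((Submodule.span (ZMod p) A).toAddSubgroup)).mpr
        Submodule.subset_span hx
    · rw [Submodule.span_le]
      intro a ha
      simp only [SetLike.mem_coe, AddSubgroup.mem_toZModSubmodule]
      exact AddSubgroup.subset_closure ha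
  constructor
  · intro ht; rw [← h, ht]; exact OrderIso.map_top _
  · intro ht
    have h2 := h.trans ht
    have := congrArg (AddSubgroup.toZModSubmodule p).symm h2
    simpa using this

/-- Multiplicative closure vs span of the additivized image. -/
lemma closure_eq_top_iff_span {p : ℕ} [NeZero p] {V : Type*} [CommGroup V]
    [Module (ZMod p) (Additive V)] (B : Set V) :
    Subgroup.closure B = ⊤ ↔
      Submodule.span (ZMod p) (Additive.ofMul '' B) = ⊤ := by
  have h1 : Subgroup.toAddSubgroup (Subgroup.closure B)
      = AddSubgroup.closure (Additive.ofMul '' B) := by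
    apply le_antisymm
    · have h2 : Subgroup.closure B ≤ Subgroup.toAddSubgroup.symm
          (AddSubgroup.closure (Additive.ofMul '' B)) := by
        rw [Subgroup.closure_le]
        intro b hb
        exact AddSubgroup.subset_closure (G := Additive V) (Set.mem_image_of_mem _ hb)
      exact fun x hx => h2 hx
    · rw [AddSubgroup.closure_le]
      rintro _ ⟨b, hb, rfl⟩
      exact Subgroup.subset_closure (G := V) hb
  rw [← addclosure_eq_top_iff_span, ← h1]
  constructor
  · intro ht; rw [ht]; exact OrderIso.map_top _
  · intro ht
    have := congrArg Subgroup.toAddSubgroup.symm ht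
    simpa using this

/-- Core Frattini-type lemma: if `K ⊔ H = ⊤` where `H` is the central subgroup generated by
commutators and `p`-th powers, then `K = ⊤`. -/
lemma coreA {G : Type*} [Group G] [Finite G] (p : ℕ) [Fact p.Prime]
    (hp : IsPGroup p G)
    (H K : Subgroup G)
    (hHdef : H = Subgroup.closure ({g | ∃ a b : G, g = ⁅a, b⁆} ∪ {g | ∃ a : G, g = a ^ p}))
    (hHc : H ≤ Subgroup.center G)
    (hsup : K ⊔ H = ⊤) : K = ⊤ := by
  have hKn : K.Normal := by
    rw [← Subgroup.normalizer_eq_top_iff, eq_top_iff, ← hsup]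
    exact sup_le Subgroup.le_normalizer (hHc.trans (Subgroup.center_le_normalizer _))
  have hrep : ∀ q : G ⧸ K, ∃ h ∈ H, QuotientGroup.mk h = q := by
    intro q
    obtain ⟨g, rfl⟩ := QuotientGroup.mk_surjective q
    have hg : g ∈ (↑(K ⊔ H) : Set G) := by rw [hsup]; trivial
    rw [Subgroup.normal_mul K H] at hg
    obtain ⟨k, hk, h, hh, rfl⟩ := hg
    refine ⟨h, hh, ?_⟩
    rw [QuotientGroup.mk_mul, (QuotientGroup.eq_one_iff k).mpr hk, one_mul]
  have hQcomm : ∀ a b : G ⧸ K, a * b = b * a := by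
    intro a b
    obtain ⟨h, hh, rfl⟩ := hrep a
    obtain ⟨g, rfl⟩ := QuotientGroup.mk_surjective b
    rw [← QuotientGroup.mk_mul, ← QuotientGroup.mk_mul,
      (Subgroup.mem_center_iff.mp (hHc hh) g)]
  have hsurj : Function.Surjective (fun q : G ⧸ K => q ^ p) := by
    intro q
    obtain ⟨h, hh, rfl⟩ := hrep q
    have h2 : (QuotientGroup.mk h : G ⧸ K) ∈ Subgroup.map (QuotientGroup.mk' K) H :=
      ⟨h, hh, rfl⟩
    rw [hHdef, MonoidHom.map_closure] at h2
    let R : Subgroup (G ⧸ K) :=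
      { carrier := Set.range (fun y : G ⧸ K => y ^ p)
        one_mem' := ⟨1, one_pow p⟩
        mul_mem' := by
          rintro a b ⟨y, rfl⟩ ⟨z, rfl⟩
          exact ⟨y * z, Commute.mul_pow (hQcomm y z) p⟩
        inv_mem' := by
          rintro a ⟨y, rfl⟩
          exact ⟨y⁻¹, by simp [inv_pow]⟩ }
    have hle : Subgroup.closure ((QuotientGroup.mk' K) ''
        ({g | ∃ a b : G, g = ⁅a, b⁆} ∪ {g | ∃ a : G, g = a ^ p})) ≤ R := by
      rw [Subgroup.closure_le]
      rintro _ ⟨a, ha, rfl⟩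
      rcases ha with h' | h'
      · obtain ⟨u, v, rfl⟩ := h'
        refine ⟨1, ?_⟩
        show (1 : G ⧸ K) ^ p = _
        rw [one_pow, map_commutatorElement]
        exact (commutatorElement_eq_one_iff_commute.mpr (hQcomm _ _)).symm
      · obtain ⟨a, rfl⟩ := h'
        exact ⟨QuotientGroup.mk a, by simp [← map_pow]⟩
    obtain ⟨y, hy⟩ := hle h2
    exact ⟨y, hy⟩
  have hinj : Function.Injective (fun q : G ⧸ K => q ^ p) :=
    Finite.injective_iff_surjective.mpr hsurj
  have key : ∀ (n : ℕ) (q : G ⧸ K), q ^ p ^ n = 1 → q = 1 := by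
    intro n
    induction n with
    | zero => intro q h; simpa using h
    | succ n ih =>
      intro q h
      apply ih
      apply hinj
      show (q ^ p ^ n) ^ p = 1 ^ p
      rw [one_pow, ← pow_mul, ← pow_succ]
      exact h
  rw [Subgroup.eq_top_iff']
  intro g
  obtain ⟨n, hn⟩ := (hp.to_quotient K) (QuotientGroup.mk g)
  exact (QuotientGroup.eq_one_iff g).mp (key n _ hn)

/-- A minimal generating set of a group. -/
def IsMinGen {G : Type*} [Group G] (s : Set G) : Prop :=
  Subgroup.closure s = ⊤ ∧ ∀ t : Set G, t ⊂ s → Subgroup.closure t ≠ ⊤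

theorem stmt_12 {G : Type*} [Group G] [Finite G] (p : ℕ) [Fact p.Prime]
    (hp : IsPGroup p G) (hclass : commutator G ≤ Subgroup.center G)
    (hexp : ∀ c ∈ commutator G, c ^ p = 1)
    (d : ℕ) (x : Fin d → G) (hinj : Function.Injective x)
    (hgen : IsMinGen (Set.range x))
    (α β : Fin d → ℕ) (hα : ∀ i, α i ≤ p - 1) (hβ : ∀ i, β i ≤ p - 1)
    (g₁ g₂ : G)
    (hg₁ : g₁ = (List.ofFn fun i => x i ^ α i).prod)
    (hg₂ : g₂ = (List.ofFn fun i => x i ^ β i).prod)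
    (hne : g₁ ≠ g₂) (hcomm : g₁⁻¹ * g₂⁻¹ * g₁ * g₂ ≠ 1) :
    ∃ s : Set G, IsMinGen s ∧ g₁ ∈ s ∧ g₂ ∈ s := by
  classical
  have hK : ¬ Commute g₁ g₂ := by
    intro h
    apply hcomm
    have h1 : ⁅g₁⁻¹, g₂⁻¹⁆ = 1 :=
      commutatorElement_eq_one_iff_commute.mpr (h.inv_left.inv_right)
    simpa [commutatorElement_def, mul_assoc] using h1
  obtain ⟨S, hS⟩ : ∃ S : Set G, S = {g | ∃ a b : G, g = ⁅a, b⁆} ∪ {g | ∃ a : G, g = a ^ p} :=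
    ⟨_, rfl⟩
  obtain ⟨H, hHdef⟩ : ∃ H : Subgroup G, H = Subgroup.closure S := ⟨_, rfl⟩
  have hHc : H ≤ Subgroup.center G := by
    rw [hHdef, Subgroup.closure_le, hS]
    rintro g (⟨a, b, rfl⟩ | ⟨a, rfl⟩)
    · exact hclass (commutator_def G ▸
        Subgroup.commutator_mem_commutator (Subgroup.mem_top a) (Subgroup.mem_top b))
    · rw [SetLike.mem_coe, Subgroup.mem_center_iff]
      intro g
      have hd : ⁅g, a⁆ ∈ commutator G := commutator_def G ▸
        Subgroup.commutator_mem_commutator (Subgroup.mem_top g) (Subgroup.mem_top a)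
      have hdc : Commute ⁅g, a⁆ a :=
        Commute.symm (Subgroup.mem_center_iff.mp (hclass hd) a)
      have hdp : ⁅g, a⁆ ^ p = 1 := hexp _ hd
      have hcj : g * a ^ p * g⁻¹ = a ^ p := by
        have h1 : g * a * g⁻¹ = ⁅g, a⁆ * a := by
          rw [commutatorElement_def]; group
        calc g * a ^ p * g⁻¹ = (g * a * g⁻¹) ^ p := by rw [conj_pow]
          _ = (⁅g, a⁆ * a) ^ p := by rw [h1]
          _ = ⁅g, a⁆ ^ p * a ^ p := hdc.mul_pow p
          _ = a ^ p := by rw [hdp, one_mul]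
      calc g * a ^ p = (g * a ^ p * g⁻¹) * g := by group
        _ = a ^ p * g := by rw [hcj]
  have hCent : ∀ h ∈ H, ∀ g : G, Commute g h :=
    fun h hh g => Subgroup.mem_center_iff.mp (hHc hh) g
  haveI hHnormal : H.Normal := by
    constructor
    intro h hh g
    have hcg : g * h = h * g := Subgroup.mem_center_iff.mp (hHc hh) g
    have : g * h * g⁻¹ = h := by rw [hcg]; group
    rw [this]; exact hh
  have hVcomm : ∀ a b : G ⧸ H, a * b = b * a := by
    intro a b
    obtain ⟨a, rfl⟩ := QuotientGroup.mk_surjective a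
    obtain ⟨b, rfl⟩ := QuotientGroup.mk_surjective b
    rw [← QuotientGroup.mk_mul, ← QuotientGroup.mk_mul]
    apply QuotientGroup.eq.mpr
    rw [hHdef]
    apply Subgroup.subset_closure
    rw [hS]
    exact Or.inl ⟨b⁻¹, a⁻¹, by rw [commutatorElement_def]; group⟩
  letI : CommGroup (G ⧸ H) := { (inferInstance : Group (G ⧸ H)) with mul_comm := hVcomm }
  haveI : Module (ZMod p) (Additive (G ⧸ H)) := AddCommGroup.zmodModule (by
    intro xx
    obtain ⟨g, hg⟩ := QuotientGroup.mk_surjective (Additive.toMul xx)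
    have hpow : Additive.toMul xx ^ p = 1 := by
      rw [← hg, ← QuotientGroup.mk_pow]
      refine (QuotientGroup.eq_one_iff _).mpr ?_
      rw [hHdef]
      apply Subgroup.subset_closure
      rw [hS]
      exact Or.inr ⟨g, rfl⟩
    show Additive.ofMul (Additive.toMul xx ^ p) = 0
    rw [hpow]
    rfl)
  let π : G → Additive (G ⧸ H) := fun g => Additive.ofMul (QuotientGroup.mk g : G ⧸ H)
  have hcond1 : π g₁ ≠ 0 := by
    intro h0
    have h1 : (QuotientGroup.mk g₁ : G ⧸ H) = 1 := Additive.ofMul.injective h0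
    exact hK ((hCent g₁ ((QuotientGroup.eq_one_iff g₁).mp h1) g₂).symm)
  have hcond2 : ∀ a : ZMod p, a • π g₁ ≠ π g₂ := by
    intro a hEq
    have ha2 : ((a.val : ZMod p)) = a := ZMod.natCast_rightInverse a
    rw [← ha2, Nat.cast_smul_eq_nsmul] at hEq
    have hEq' : Additive.ofMul ((QuotientGroup.mk g₁ : G ⧸ H) ^ a.val)
        = Additive.ofMul (QuotientGroup.mk g₂ : G ⧸ H) := hEq
    have e : (QuotientGroup.mk (g₁ ^ a.val) : G ⧸ H) = QuotientGroup.mk g₂ := by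
      rw [QuotientGroup.mk_pow]
      exact Additive.ofMul.injective hEq'
    have hmem : (g₁ ^ a.val)⁻¹ * g₂ ∈ H := QuotientGroup.eq.mp e
    have hcmt : Commute g₁ g₂ := by
      have h2 : g₂ = g₁ ^ a.val * ((g₁ ^ a.val)⁻¹ * g₂) := by group
      rw [h2]
      exact Commute.mul_right ((Commute.refl g₁).pow_right _) (hCent _ hmem g₁)
    exact hK hcmt
  have hli : LinearIndependent (ZMod p) ![π g₂, π g₁] := by
    rw [linearIndependent_fin2]
    constructor
    · simpa using hcond1
    · intro a
      simpa using hcond2 a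
  have hne12 : π g₁ ≠ π g₂ := by
    have := hcond2 1
    rwa [one_smul] at this
  have hss : LinearIndependent (ZMod p)
      ((↑) : ({π g₂, π g₁} : Set (Additive (G ⧸ H))) → Additive (G ⧸ H)) := by
    have hr : Set.range ![π g₂, π g₁] = ({π g₂, π g₁} : Set (Additive (G ⧸ H))) := by
      rw [Matrix.range_cons, Matrix.range_cons_empty]
      rfl
    have hli' := (linearIndepOn_id_range_iff hli.injective).mpr hli
    rw [hr] at hli'
    exact hli'
  obtain ⟨b, _hbt, hsb, hspan, hlib⟩ : ∃ b ⊆ (Set.univ : Set (Additive (G ⧸ H))),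
      {π g₂, π g₁} ⊆ b ∧ Set.univ ⊆ (Submodule.span (ZMod p) b : Set (Additive (G ⧸ H))) ∧
      LinearIndependent (ZMod p) ((↑) : b → Additive (G ⧸ H)) := by
    have hext := exists_linearIndepOn_extension (K := ZMod p) (v := id) hss (Set.subset_univ _)
    simp only [Set.image_id] at hext
    exact hext
  have hspan' : Submodule.span (ZMod p) b = (⊤ : Submodule (ZMod p) (Additive (G ⧸ H))) :=
    Submodule.eq_top_iff'.mpr fun z => hspan (Set.mem_univ z)
  have hsurjV : ∀ w : Additive (G ⧸ H), ∃ g : G, π g = w := by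
    intro w
    obtain ⟨g, hg⟩ := QuotientGroup.mk_surjective (Additive.toMul w)
    exact ⟨g, congrArg Additive.ofMul hg⟩
  let ℓ : Additive (G ⧸ H) → G := fun w =>
    if w = π g₁ then g₁ else if w = π g₂ then g₂ else Classical.choose (hsurjV w)
  have hπℓ : ∀ w, π (ℓ w) = w := by
    intro w
    by_cases h1 : w = π g₁
    · simp only [ℓ, if_pos h1]; exact h1.symm
    · by_cases h2 : w = π g₂
      · simp only [ℓ, if_neg h1, if_pos h2]; exact h2.symm
      · simp only [ℓ, if_neg h1, if_neg h2]; exact Classical.choose_spec (hsurjV w)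
  have hmem1 : g₁ ∈ ℓ '' b := by
    refine ⟨π g₁, hsb (by right; rfl), ?_⟩
    simp only [ℓ, if_pos rfl]
  have hmem2 : g₂ ∈ ℓ '' b := by
    refine ⟨π g₂, hsb (by left; rfl), ?_⟩
    simp only [ℓ, if_neg (Ne.symm hne12), if_pos rfl]
    simp
  have himg : π '' (ℓ '' b) = b := by
    rw [Set.image_image]
    exact (Set.image_congr fun w _ => hπℓ w).trans (Set.image_id b)
  have hGen : Subgroup.closure (ℓ '' b) = ⊤ := by
    have h1 : Subgroup.closure (QuotientGroup.mk '' (ℓ '' b) : Set (G ⧸ H)) = ⊤ := by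
      rw [closure_eq_top_iff_span (p := p)]
      rw [Set.image_image]
      show Submodule.span (ZMod p) (π '' (ℓ '' b)) = ⊤
      rw [himg, hspan']
    have h2 : Subgroup.map (QuotientGroup.mk' H) (Subgroup.closure (ℓ '' b)) = ⊤ := by
      rw [MonoidHom.map_closure]
      exact h1
    have h3 := congrArg (Subgroup.comap (QuotientGroup.mk' H)) h2
    rw [Subgroup.comap_map_eq, QuotientGroup.ker_mk', Subgroup.comap_top] at h3
    exact coreA p hp H _ (hHdef.trans (by rw [hS])) hHc h3
  have hMin : ∀ t : Set G, t ⊂ ℓ '' b → Subgroup.closure t ≠ ⊤ := by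
    intro t hts hT
    obtain ⟨a, has, hat⟩ := Set.exists_of_ssubset hts
    obtain ⟨w, hwb, rfl⟩ := has
    have hsubt : π '' t ⊆ b \ {w} := by
      rintro _ ⟨g, hgt, rfl⟩
      obtain ⟨w', hw'b, rfl⟩ := hts.1 hgt
      rw [hπℓ w']
      refine ⟨hw'b, fun hww => ?_⟩
      exact hat ((Set.mem_singleton_iff.mp hww) ▸ hgt)
    have hT1 : Subgroup.closure (QuotientGroup.mk '' t : Set (G ⧸ H)) = ⊤ := by
      have h5 := MonoidHom.map_closure (QuotientGroup.mk' H) t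
      rw [hT, Subgroup.map_top_of_surjective _ (QuotientGroup.mk'_surjective H)] at h5
      exact h5.symm
    have hT2 : Submodule.span (ZMod p) (π '' t) = ⊤ := by
      have h6 := (closure_eq_top_iff_span (p := p) (QuotientGroup.mk '' t : Set (G ⧸ H))).mp hT1
      rwa [Set.image_image] at h6
    have hnot : w ∉ Submodule.span (ZMod p) (b \ {w}) := by
      have h4 := hlib.notMem_span_image
        (s := {y : ↑b | (y : Additive (G ⧸ H)) ≠ w}) (x := ⟨w, hwb⟩) (by simp)
      have h5 : ((↑) : ↑b → Additive (G ⧸ H)) '' {y : ↑b | (y : Additive (G ⧸ H)) ≠ w}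
          = b \ {w} := by
        ext z
        constructor
        · rintro ⟨⟨z, hz⟩, hzne, rfl⟩; exact ⟨hz, hzne⟩
        · rintro ⟨hzb, hzw⟩; exact ⟨⟨z, hzb⟩, hzw, rfl⟩
      rwa [h5] at h4
    apply hnot
    have h7 : w ∈ Submodule.span (ZMod p) (π '' t) := by rw [hT2]; trivial
    exact Submodule.span_mono hsubt h7
  exact ⟨ℓ '' b, ⟨hGen, hMin⟩, hmem1, hmem2⟩
end

section
/- Let G be a finite group and 1 ≠ g ∈ K(G). Then (1/(|G|·b(G)))·|{x ∈ G : g ∈ [x,G]}| ≤ Pr_g(G) ≤ (1/|G|)·Σ_{x ∈ G\Z(G)} 1/|x^G|. -/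
attribute [local instance] Classical.propDecidable

-- orbit stabilizer
lemma aux_orbit_stab {G : Type*} [Group G] [Fintype G] (x : G) :
    Nat.card {z : G // IsConj x z} * Nat.card {c : G // c * x * c⁻¹ = x} = Nat.card G := by
  classical
  have e1 : {z : G // z ∈ MulAction.orbit (ConjAct G) x} ≃ {z : G // IsConj x z} :=
    Equiv.subtypeEquivRight (fun z => by rw [ConjAct.mem_orbit_conjAct]; exact isConj_comm)
  have e2 : {c : G // c * x * c⁻¹ = x} ≃ (MulAction.stabilizer (ConjAct G) x) :=
    (ConjAct.toConjAct (G := G)).toEquiv.subtypeEquiv (fun c => by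
      rw [MulAction.mem_stabilizer_iff]
      show c * x * c⁻¹ = x ↔ ConjAct.toConjAct c • x = x
      rw [ConjAct.smul_def, ConjAct.ofConjAct_toConjAct])
  have e3 : ConjAct G ≃ G := (ConjAct.ofConjAct (G := G)).toEquiv
  have h := Nat.card_congr (MulAction.orbitProdStabilizerEquivGroup (ConjAct G) x)
  rw [Nat.card_prod] at h
  calc Nat.card {z : G // IsConj x z} * Nat.card {c : G // c * x * c⁻¹ = x}
      = Nat.card (MulAction.orbit (ConjAct G) x) * Nat.card (MulAction.stabilizer (ConjAct G) x) :=
        congrArg₂ (· * ·) (Nat.card_congr e1.symm) (Nat.card_congr e2)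
    _ = Nat.card (ConjAct G) := h
    _ = Nat.card G := Nat.card_congr e3

lemma aux_coset {G : Type*} [Group G] {g x y₀ : G} (h0 : x⁻¹ * y₀⁻¹ * x * y₀ = g) :
    Nat.card {y : G // x⁻¹ * y⁻¹ * x * y = g} = Nat.card {c : G // c * x * c⁻¹ = x} := by
  apply Nat.card_congr
  have h0c : y₀⁻¹ * x * y₀ = x * g := by rw [← h0]; group
  have key1 : ∀ y : G, x⁻¹ * y⁻¹ * x * y = g → y * y₀⁻¹ * x * (y * y₀⁻¹)⁻¹ = x := by
    intro y hy
    have hc : y⁻¹ * x * y = x * g := by rw [← hy]; group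
    calc y * y₀⁻¹ * x * (y * y₀⁻¹)⁻¹
        = y * (y₀⁻¹ * x * y₀) * y⁻¹ := by group
      _ = y * (y⁻¹ * x * y) * y⁻¹ := by rw [h0c, ← hc]
      _ = x := by group
  have key2 : ∀ c : G, c * x * c⁻¹ = x → x⁻¹ * (c * y₀)⁻¹ * x * (c * y₀) = g := by
    intro c hcx
    have hc2 : c * x = x * c := mul_inv_eq_iff_eq_mul.mp hcx
    have hc3 : c⁻¹ * x * c = x := by rw [mul_assoc, ← hc2]; group
    calc x⁻¹ * (c * y₀)⁻¹ * x * (c * y₀)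
        = x⁻¹ * y₀⁻¹ * (c⁻¹ * x * c) * y₀ := by group
      _ = x⁻¹ * y₀⁻¹ * x * y₀ := by rw [hc3]
      _ = g := h0
  exact ⟨fun y => ⟨y.1 * y₀⁻¹, key1 y.1 y.2⟩, fun c => ⟨c.1 * y₀, key2 c.1 c.2⟩,
    fun y => Subtype.ext (inv_mul_cancel_right y.1 y₀),
    fun c => Subtype.ext (mul_inv_cancel_right c.1 y₀)⟩

theorem stmt_15 {G : Type*} [Group G] [Fintype G] (g : G) (hg1 : g ≠ 1)
    (hgK : ∃ a b : G, a⁻¹ * b⁻¹ * a * b = g) :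
    (1 / ((Nat.card G : ℚ) * (bG G : ℚ))) *
        (Nat.card {x : G // ∃ y : G, x⁻¹ * y⁻¹ * x * y = g} : ℚ) ≤ Prg G g ∧
      Prg G g ≤ (1 / (Nat.card G : ℚ)) *
        ∑ x : G, (if x ∈ Subgroup.center G then 0
          else (1 : ℚ) / (Nat.card {z : G // IsConj x z} : ℚ)) := by
  classical
  set n := Nat.card G with hn
  have hnpos : 0 < n := Nat.card_pos
  -- conjugacy class sizes
  set k : G → ℕ := fun x => Nat.card {z : G // IsConj x z} with hk
  have hkpos : ∀ x, 0 < k x := fun x => by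
    have : Nonempty {z : G // IsConj x z} := ⟨⟨x, IsConj.refl x⟩⟩
    exact Nat.card_pos
  set cC : G → ℕ := fun x => Nat.card {c : G // c * x * c⁻¹ = x} with hcC
  have hos : ∀ x, k x * cC x = n := fun x => aux_orbit_stab x
  have hkb : ∀ x, k x ≤ bG G := fun x => Finset.le_sup (Finset.mem_univ x)
  have hbpos : 0 < bG G := lt_of_lt_of_le (hkpos 1) (hkb 1)
  -- decompose total count
  set cS : G → ℕ := fun x => Nat.card {y : G // x⁻¹ * y⁻¹ * x * y = g} with hcS
  have hdecomp : Nat.card {p : G × G // p.1⁻¹ * p.2⁻¹ * p.1 * p.2 = g} = ∑ x : G, cS x := by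
    rw [Nat.card_congr (Equiv.subtypeProdEquivSigmaSubtype
      (fun a b : G => a⁻¹ * b⁻¹ * a * b = g))]
    simp [hcS, Nat.card_eq_fintype_card, Fintype.card_sigma]
  have hPrg : Prg G g = (∑ x : G, (cS x : ℚ)) / (n : ℚ) ^ 2 := by
    rw [Prg, hdecomp]; push_cast; ring_nf; rfl
  constructor
  · -- lower bound
    set T : Finset G := Finset.univ.filter (fun x => ∃ y : G, x⁻¹ * y⁻¹ * x * y = g) with hT
    have hNT : Nat.card {x : G // ∃ y : G, x⁻¹ * y⁻¹ * x * y = g} = T.card := by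
      rw [Nat.card_eq_fintype_card, Fintype.card_subtype]
    have key : T.card * n ≤ (∑ x : G, cS x) * bG G := by
      calc T.card * n = ∑ x ∈ T, n := by rw [Finset.sum_const, smul_eq_mul]
        _ ≤ ∑ x ∈ T, cS x * bG G := by
            apply Finset.sum_le_sum
            intro x hx
            obtain ⟨y₀, hy₀⟩ := (Finset.mem_filter.mp hx).2
            have : cS x = cC x := aux_coset hy₀
            calc n = k x * cC x := (hos x).symm
              _ ≤ bG G * cC x := Nat.mul_le_mul_right _ (hkb x)
              _ = cS x * bG G := by rw [this, Nat.mul_comm]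
        _ ≤ ∑ x : G, cS x * bG G := Finset.sum_le_sum_of_subset (Finset.filter_subset _ _)
        _ = (∑ x : G, cS x) * bG G := (Finset.sum_mul ..).symm
    rw [hPrg, hNT]
    rw [div_mul_eq_mul_div, one_mul, div_le_div_iff₀ (by positivity) (by positivity)]
    have : ((T.card * n : ℕ) : ℚ) ≤ (((∑ x : G, cS x) * bG G : ℕ) : ℚ) := by exact_mod_cast key
    push_cast at this
    calc (T.card : ℚ) * (n : ℚ) ^ 2 = ((T.card : ℚ) * n) * n := by ring
      _ ≤ ((∑ x : G, (cS x : ℚ)) * bG G) * n := by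
          apply mul_le_mul_of_nonneg_right _ (by positivity)
          simpa using this
      _ = (∑ x : G, (cS x : ℚ)) * ((n : ℚ) * bG G) := by ring
  · -- upper bound
    have hpoint : ∀ x : G, (cS x : ℚ) / (n : ℚ) ^ 2 ≤
        (if x ∈ Subgroup.center G then 0 else (1 : ℚ) / (n : ℚ) * (1 / (k x : ℚ))) := by
      intro x
      by_cases hx : x ∈ Subgroup.center G
      · simp only [hx, if_true]
        have : IsEmpty {y : G // x⁻¹ * y⁻¹ * x * y = g} := by
          constructor
          rintro ⟨y, hy⟩
          apply hg1
          rw [← hy]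
          have hcomm := (Subgroup.mem_center_iff.mp hx) y⁻¹
          calc x⁻¹ * y⁻¹ * x * y = x⁻¹ * (y⁻¹ * x) * y := by group
            _ = x⁻¹ * (x * y⁻¹) * y := by rw [hcomm]
            _ = 1 := by group
        have : cS x = 0 := by simp [hcS, Nat.card_of_isEmpty, this]
        rw [this]
        simp
      · simp only [hx, if_false]
        have hcc : (k x : ℚ) * (cC x : ℚ) = (n : ℚ) := by exact_mod_cast hos x
        have hSle : cS x ≤ cC x := by
          by_cases hS : ∃ y : G, x⁻¹ * y⁻¹ * x * y = g
          · obtain ⟨y₀, hy₀⟩ := hS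
            exact le_of_eq (aux_coset hy₀)
          · have : IsEmpty {y : G // x⁻¹ * y⁻¹ * x * y = g} := by
              constructor; rintro ⟨y, hy⟩; exact hS ⟨y, hy⟩
            simp [hcS, Nat.card_of_isEmpty, this]
        have hkne : (0:ℚ) < (k x : ℚ) := by exact_mod_cast hkpos x
        have h1 : (1 : ℚ) / (n : ℚ) * (1 / (k x : ℚ)) = (cC x : ℚ) / (n : ℚ) ^ 2 := by
          rw [div_mul_div_comm, one_mul, div_eq_div_iff (by positivity) (by positivity),
            one_mul, pow_two, ← hcc]
          ring
        rw [h1]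
        gcongr ?_ / _
        exact_mod_cast hSle
    rw [hPrg]
    rw [Finset.mul_sum]
    calc (∑ x : G, (cS x : ℚ)) / (n : ℚ) ^ 2 = ∑ x : G, (cS x : ℚ) / (n : ℚ) ^ 2 := by
          rw [Finset.sum_div]
      _ ≤ ∑ x : G, (if x ∈ Subgroup.center G then 0
            else (1 : ℚ) / (n : ℚ) * (1 / (k x : ℚ))) := Finset.sum_le_sum (fun x _ => hpoint x)
      _ = ∑ x : G, (1 : ℚ) / (n : ℚ) * (if x ∈ Subgroup.center G then 0
            else (1 : ℚ) / (k x : ℚ)) := by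
          apply Finset.sum_congr rfl
          intro x _
          by_cases hx : x ∈ Subgroup.center G <;> simp [hx]
end

section
/- Let G be a finite group and 1 ≠ g ∈ γ₂(G). Then Pr_g(G) < Pr(G). -/
theorem stmt_16 {G : Type*} [Group G] [Finite G] (g : G) (hg1 : g ≠ 1)
    (hg : g ∈ commutator G) :
    Prg G g < Prg G 1 := by
  classical
  -- canonical solution for each x (if any)
  set y0 : G → G := fun x => if h : ∃ y : G, x⁻¹ * y⁻¹ * x * y = g then h.choose else 1 with hy0
  have hy0spec : ∀ x y : G, x⁻¹ * y⁻¹ * x * y = g → x⁻¹ * (y0 x)⁻¹ * x * (y0 x) = g := by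
    intro x y h
    have hex : ∃ y : G, x⁻¹ * y⁻¹ * x * y = g := ⟨y, h⟩
    simp only [hy0, dif_pos hex]
    exact hex.choose_spec
  -- the injection
  have key : ∀ (x y : G), x⁻¹ * y⁻¹ * x * y = g →
      x⁻¹ * (y * (y0 x)⁻¹)⁻¹ * x * (y * (y0 x)⁻¹) = 1 := by
    intro x y h
    have h0 := hy0spec x y h
    have e : y⁻¹ * x * y = (y0 x)⁻¹ * x * (y0 x) := by
      have ht := h.trans h0.symm
      calc y⁻¹ * x * y = x * (x⁻¹ * y⁻¹ * x * y) := by group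
        _ = x * (x⁻¹ * (y0 x)⁻¹ * x * (y0 x)) := by rw [ht]
        _ = (y0 x)⁻¹ * x * (y0 x) := by group
    calc x⁻¹ * (y * (y0 x)⁻¹)⁻¹ * x * (y * (y0 x)⁻¹)
        = x⁻¹ * (y0 x) * (y⁻¹ * x * y) * (y0 x)⁻¹ := by group
      _ = x⁻¹ * (y0 x) * ((y0 x)⁻¹ * x * (y0 x)) * (y0 x)⁻¹ := by rw [e]
      _ = 1 := by group
  let f : {p : G × G // p.1⁻¹ * p.2⁻¹ * p.1 * p.2 = g} →
      {p : G × G // p.1⁻¹ * p.2⁻¹ * p.1 * p.2 = 1} :=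
    fun p => ⟨(p.1.1, p.1.2 * (y0 p.1.1)⁻¹), key p.1.1 p.1.2 p.2⟩
  have hinj : Function.Injective f := by
    rintro ⟨⟨x, y⟩, h⟩ ⟨⟨x', y'⟩, h'⟩ hfe
    simp only [f, Subtype.mk.injEq, Prod.mk.injEq] at hfe
    obtain ⟨hx, hy⟩ := hfe
    subst hx
    have : y = y' := mul_right_cancel hy
    simp [this]
  have hnotmem : (⟨(1, 1), by group⟩ : {p : G × G // p.1⁻¹ * p.2⁻¹ * p.1 * p.2 = 1}) ∉
      Set.range f := by
    rintro ⟨⟨⟨x, y⟩, h⟩, hfe⟩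
    simp only [f, Subtype.mk.injEq, Prod.mk.injEq] at hfe
    apply hg1
    rw [← h, hfe.1]
    group
  have hcard : Nat.card {p : G × G // p.1⁻¹ * p.2⁻¹ * p.1 * p.2 = g} <
      Nat.card {p : G × G // p.1⁻¹ * p.2⁻¹ * p.1 * p.2 = 1} := by
    have : Fintype G := Fintype.ofFinite G
    have i1 : Fintype {p : G × G // p.1⁻¹ * p.2⁻¹ * p.1 * p.2 = g} := Fintype.ofFinite _
    have i2 : Fintype {p : G × G // p.1⁻¹ * p.2⁻¹ * p.1 * p.2 = 1} := Fintype.ofFinite _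
    rw [Nat.card_eq_fintype_card, Nat.card_eq_fintype_card]
    exact Fintype.card_lt_of_injective_of_notMem f hinj hnotmem
  have hGpos : (0 : ℚ) < (Nat.card G : ℚ) ^ 2 := by
    have : 0 < Nat.card G := Nat.card_pos
    positivity
  unfold Prg
  exact div_lt_div_of_pos_right (by exact_mod_cast hcard) hGpos
end

section
/- Let G be a finite group, 1 ≠ g ∈ K(G). Then Pr_g(G) = (1/|G|)·Σ_{x ∈ G\Z(G)} 1/|x^G| if and only if g ∈ [x,G] for all x ∈ G \ Z(G). -/
attribute [local instance] Classical.propDecidable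

section Aux

variable {G : Type*} [Group G] [Fintype G]

/-- Orbit–stabilizer for conjugation. -/
lemma conj_card_mul (x : G) :
    Nat.card {z : G // IsConj x z} * Nat.card (Subgroup.centralizer ({x} : Set G)) =
      Nat.card G := by
  classical
  have e1 : {z : G // IsConj x z} ≃ MulAction.orbit (ConjAct G) x :=
    Equiv.subtypeEquivRight fun z => by
      rw [ConjAct.mem_orbit_conjAct, isConj_comm]
  have e2 : (Subgroup.centralizer ({x} : Set G)) ≃ MulAction.stabilizer (ConjAct G) x :=
    ConjAct.toConjAct.toEquiv.subtypeEquiv fun k => by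
      show k ∈ Subgroup.centralizer ({x} : Set G) ↔ ConjAct.toConjAct k • x = x
      rw [Subgroup.mem_centralizer_singleton_iff, ConjAct.toConjAct_smul,
        mul_inv_eq_iff_eq_mul]
  rw [Nat.card_congr e1, Nat.card_congr e2, Nat.card_eq_fintype_card,
    Nat.card_eq_fintype_card, Nat.card_eq_fintype_card]
  have := MulAction.card_orbit_mul_card_stabilizer_eq_card_group (ConjAct G) x
  simpa [ConjAct.card] using this

lemma center_not_ex {x g : G} (hz : x ∈ Subgroup.center G) (hg1 : g ≠ 1) :
    ¬ ∃ y : G, x⁻¹ * y⁻¹ * x * y = g := by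
  rintro ⟨y, hy⟩
  apply hg1
  rw [← hy]
  have h1 : y⁻¹ * x = x * y⁻¹ := Subgroup.mem_center_iff.mp hz y⁻¹
  calc x⁻¹ * y⁻¹ * x * y = x⁻¹ * (y⁻¹ * x) * y := by group
    _ = x⁻¹ * (x * y⁻¹) * y := by rw [h1]
    _ = 1 := by group

lemma fiber_card (x g : G) :
    Nat.card {y : G // x⁻¹ * y⁻¹ * x * y = g} =
      if ∃ y : G, x⁻¹ * y⁻¹ * x * y = g then
        Nat.card (Subgroup.centralizer ({x} : Set G)) else 0 := by
  classical
  split_ifs with h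
  · obtain ⟨y0, hy0⟩ := h
    refine Nat.card_congr ?_
    refine ⟨fun y => ⟨y.1 * y0⁻¹, ?_⟩, fun z => ⟨z.1 * y0, ?_⟩, ?_, ?_⟩
    · obtain ⟨y, hy⟩ := y
      rw [Subgroup.mem_centralizer_singleton_iff]
      have e1 : x * y = y * (x * g) := by rw [← hy]; group
      have e0 : y0⁻¹ * x = x * g * y0⁻¹ := by rw [← hy0]; group
      calc y * y0⁻¹ * x = y * (x * g * y0⁻¹) := by rw [mul_assoc, e0]
        _ = (x * y) * y0⁻¹ := by rw [e1]; group
        _ = x * (y * y0⁻¹) := by rw [mul_assoc]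
    · obtain ⟨z, hz⟩ := z
      rw [Subgroup.mem_centralizer_singleton_iff] at hz
      have h3 : z⁻¹ * (x * z) = x := by rw [← hz, inv_mul_cancel_left]
      calc x⁻¹ * (z * y0)⁻¹ * x * (z * y0)
          = x⁻¹ * y0⁻¹ * (z⁻¹ * (x * z)) * y0 := by group
        _ = x⁻¹ * y0⁻¹ * x * y0 := by rw [h3]
        _ = g := hy0
    · intro y; ext; simp [mul_assoc]
    · intro z; ext; simp [mul_assoc]
  · have : IsEmpty {y : G // x⁻¹ * y⁻¹ * x * y = g} := by
      constructor; rintro ⟨y, hy⟩; exact h ⟨y, hy⟩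
    simp [Nat.card_of_isEmpty]

lemma total_card (g : G) :
    (Nat.card {p : G × G // p.1⁻¹ * p.2⁻¹ * p.1 * p.2 = g}) =
      ∑ x : G, Nat.card {y : G // x⁻¹ * y⁻¹ * x * y = g} := by
  classical
  rw [Nat.card_congr (Equiv.subtypeProdEquivSigmaSubtype
    (fun a b : G => a⁻¹ * b⁻¹ * a * b = g))]
  rw [Nat.card_eq_fintype_card, Fintype.card_sigma]
  exact Finset.sum_congr rfl fun x _ => (Nat.card_eq_fintype_card).symm

end Aux

theorem stmt_17 {G : Type*} [Group G] [Fintype G] (g : G) (hg1 : g ≠ 1)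
    (hgK : ∃ a b : G, a⁻¹ * b⁻¹ * a * b = g) :
    Prg G g = (1 / (Nat.card G : ℚ)) *
        ∑ x : G, (if x ∈ Subgroup.center G then 0
          else (1 : ℚ) / (Nat.card {z : G // IsConj x z} : ℚ)) ↔
      ∀ x : G, x ∉ Subgroup.center G → ∃ y : G, x⁻¹ * y⁻¹ * x * y = g := by
  classical
  have hN : (Nat.card G : ℚ) ≠ 0 := by
    have : 0 < Nat.card G := Nat.card_pos
    exact_mod_cast this.ne'
  have hc : ∀ x : G, (Nat.card {z : G // IsConj x z} : ℚ) ≠ 0 := fun x => by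
    have : 0 < Nat.card {z : G // IsConj x z} :=
      Nat.card_pos_iff.mpr ⟨⟨⟨x, IsConj.refl x⟩⟩, inferInstance⟩
    exact_mod_cast this.ne'
  -- rewrite Prg
  have hPrg : Prg G g = (1 / (Nat.card G : ℚ)) *
      ∑ x : G, (if ∃ y : G, x⁻¹ * y⁻¹ * x * y = g then
        (1 : ℚ) / (Nat.card {z : G // IsConj x z} : ℚ) else 0) := by
    rw [Prg, total_card g, Nat.cast_sum]
    rw [Finset.mul_sum, Finset.sum_div]
    refine Finset.sum_congr rfl fun x _ => ?_
    rw [fiber_card x g]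
    split_ifs with h
    · have key : (Nat.card {z : G // IsConj x z} : ℚ) *
          (Nat.card (Subgroup.centralizer ({x} : Set G)) : ℚ) = (Nat.card G : ℚ) := by
        exact_mod_cast conj_card_mul x
      have hcent : (Nat.card (Subgroup.centralizer ({x} : Set G)) : ℚ) =
          (Nat.card G : ℚ) / (Nat.card {z : G // IsConj x z} : ℚ) := by
        rw [eq_div_iff (hc x), mul_comm]
        exact key
      rw [hcent, div_div, pow_two, one_div_mul_one_div,
        div_eq_div_iff (mul_ne_zero (hc x) (mul_ne_zero hN hN)) (mul_ne_zero hN (hc x))]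
      ring
    · simp
  rw [hPrg]
  have hmono : ∀ x ∈ Finset.univ (α := G),
      (if ∃ y : G, x⁻¹ * y⁻¹ * x * y = g then
        (1 : ℚ) / (Nat.card {z : G // IsConj x z} : ℚ) else 0) ≤
      (if x ∈ Subgroup.center G then 0
        else (1 : ℚ) / (Nat.card {z : G // IsConj x z} : ℚ)) := by
    intro x _
    split_ifs with hA hB
    · exact absurd hA (center_not_ex hB hg1)
    · exact le_rfl
    · exact le_rfl
    · positivity
  constructor
  · intro hEq x hx
    have hsum : (∑ x : G, (if ∃ y : G, x⁻¹ * y⁻¹ * x * y = g then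
        (1 : ℚ) / (Nat.card {z : G // IsConj x z} : ℚ) else 0)) =
        ∑ x : G, (if x ∈ Subgroup.center G then 0
          else (1 : ℚ) / (Nat.card {z : G // IsConj x z} : ℚ)) :=
      mul_left_cancel₀ (one_div_ne_zero hN) hEq
    have h := (Finset.sum_eq_sum_iff_of_le hmono).mp hsum x (Finset.mem_univ x)
    rw [if_neg hx] at h
    by_contra hno
    rw [if_neg hno] at h
    exact one_div_ne_zero (hc x) h.symm
  · intro hAll
    congr 1
    refine Finset.sum_congr rfl fun x _ => ?_
    by_cases hz : x ∈ Subgroup.center G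
    · rw [if_pos hz, if_neg (center_not_ex hz hg1)]
    · rw [if_pos (hAll x hz), if_neg hz]
end

section
/- Let G be a finite group having exactly two conjugacy class sizes, 1 and p, where p is prime. Then Pr(G) > 1/p. -/
theorem stmt_18 {G : Type*} [Group G] [Finite G] (p : ℕ) (hp : p.Prime)
    (htwo : ∀ x : G,
      Nat.card {z : G // IsConj x z} = 1 ∨ Nat.card {z : G // IsConj x z} = p)
    (hocc : ∃ x : G, Nat.card {z : G // IsConj x z} = p) :
    commProb' G > 1 / (p : ℚ) := by
  classical
  cases nonempty_fintype G
  have hcp : commProb' G = commProb G := rfl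
  rw [hcp, commProb_def']
  -- key counting fact: Nat.card G < p * Nat.card (ConjClasses G)
  have hcard : ∀ x : G, ((ConjClasses.mk x).carrier.toFinset.card)
      = Nat.card {z : G // IsConj x z} := by
    intro x
    have hset : (ConjClasses.mk x).carrier = {z : G | IsConj x z} := by
      ext y
      simp only [ConjClasses.mem_carrier_iff_mk_eq, ConjClasses.mk_eq_mk_iff_isConj,
        Set.mem_setOf_eq]
      exact isConj_comm
    calc (ConjClasses.mk x).carrier.toFinset.card
        = Nat.card ((ConjClasses.mk x).carrier) := by
          rw [Nat.card_coe_set_eq, Set.ncard_eq_toFinset_card']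
      _ = Nat.card {z : G // IsConj x z} := by rw [hset]; rfl
  have hkey : Nat.card G < Nat.card (ConjClasses G) * p := by
    simp only [Nat.card_eq_fintype_card]
    rw [← sum_conjClasses_card_eq_card G]
    have hlt : ∑ c : ConjClasses G, c.carrier.toFinset.card <
        ∑ _c : ConjClasses G, p := by
      apply Finset.sum_lt_sum
      · intro c _
        obtain ⟨x, rfl⟩ := c.exists_rep
        rw [hcard x]
        rcases htwo x with h | h
        · rw [h]; exact hp.one_lt.le
        · rw [h]
      · refine ⟨ConjClasses.mk 1, Finset.mem_univ _, ?_⟩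
        rw [hcard 1]
        have h1 : Nat.card {z : G // IsConj (1 : G) z} = 1 := by
          rw [Nat.card_eq_one_iff_unique]
          constructor
          · constructor
            rintro ⟨a, ha⟩ ⟨b, hb⟩
            simp only [isConj_one_right] at ha hb
            subst ha; subst hb; rfl
          · exact ⟨⟨1, IsConj.refl 1⟩⟩
        rw [h1]; exact hp.one_lt
    simpa using hlt
  have hG : (0 : ℚ) < Nat.card G := by
    exact_mod_cast Nat.card_pos
  have hp0 : (0 : ℚ) < p := by exact_mod_cast hp.pos
  rw [gt_iff_lt, div_lt_div_iff₀ hp0 hG, one_mul]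
  exact_mod_cast hkey
end

section
/- Let H be a finite p-group such that for all x ∈ H \ Z(H), [x,H] = K(H) (the set of all commutators), and suppose H has nilpotency class 3. Then γ₂(H) ≤ γ₃(H), a contradiction; hence any finite p-group of class 2 or 3 satisfying [x,H] = K(H) for all noncentral x must have class exactly 2. -/
open scoped commutatorElement

private lemma lcs_succ_comm {H : Type*} [Group H] (n : ℕ) :
    (⊤ : Subgroup H).lowerCentralSeries (n + 1) = ⁅(⊤ : Subgroup H).lowerCentralSeries n, (⊤ : Subgroup H)⁆ := rfl

theorem stmt_19 {H : Type*} [Group H] [Finite H] (p : ℕ) [Fact p.Prime]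
    (hp : IsPGroup p H) [Group.IsNilpotent H]
    (hx : ∀ x : H, x ∉ Subgroup.center H →
      {z : H | ∃ y : H, x⁻¹ * y⁻¹ * x * y = z} =
        {z : H | ∃ a b : H, a⁻¹ * b⁻¹ * a * b = z})
    (hclass : Group.nilpotencyClass H = 2 ∨ Group.nilpotencyClass H = 3) :
    Group.nilpotencyClass H = 2 := by
  rcases hclass with h | h
  · exact h
  exfalso
  have h3 : (⊤ : Subgroup H).lowerCentralSeries 3 = ⊥ := by
    have := lowerCentralSeries_nilpotencyClass (G := H)
    rwa [h] at this
  have h2 : (⊤ : Subgroup H).lowerCentralSeries 2 ≠ ⊥ := by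
    intro hb
    have : Group.nilpotencyClass H ≤ 2 :=
      lowerCentralSeries_eq_bot_iff_nilpotencyClass_le.mp hb
    omega
  have hexists : ∃ u ∈ (⊤ : Subgroup H).lowerCentralSeries 1, u ∉ Subgroup.center H := by
    by_contra hc
    push_neg at hc
    apply h2
    rw [show (2 : ℕ) = 1 + 1 from rfl, lcs_succ_comm, eq_bot_iff,
      Subgroup.commutator_le]
    intro g hg t _
    have hgc := Subgroup.mem_center_iff.mp (hc g hg) t
    have : ⁅g, t⁆ = 1 := by
      rw [commutatorElement_def, ← hgc]
      group
    simp [this]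
  obtain ⟨u, hu, hun⟩ := hexists
  have hset := hx u hun
  have hle : (⊤ : Subgroup H).lowerCentralSeries 1 ≤ (⊤ : Subgroup H).lowerCentralSeries 2 := by
    rw [lowerCentralSeries_one, commutator_def, Subgroup.commutator_le]
    intro a _ b _
    have hmem : ⁅a, b⁆ ∈ {z : H | ∃ a b : H, a⁻¹ * b⁻¹ * a * b = z} :=
      ⟨a⁻¹, b⁻¹, by group⟩
    rw [← hset] at hmem
    obtain ⟨y, hy⟩ := hmem
    have : ⁅u⁻¹, y⁻¹⁆ ∈ (⊤ : Subgroup H).lowerCentralSeries 2 := by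
      rw [show (2 : ℕ) = 1 + 1 from rfl, lcs_succ_comm]
      exact Subgroup.commutator_mem_commutator
        (((⊤ : Subgroup H).lowerCentralSeries 1).inv_mem hu) (Subgroup.mem_top _)
    have heq : ⁅u⁻¹, y⁻¹⁆ = u⁻¹ * y⁻¹ * u * y := by
      rw [commutatorElement_def]; group
    rw [heq, hy] at this
    exact this
  apply h2
  rw [eq_bot_iff, ← h3, show (3 : ℕ) = 2 + 1 from rfl,
    show (2 : ℕ) = 1 + 1 from rfl, lcs_succ_comm, lcs_succ_comm]
  exact Subgroup.commutator_mono hle le_rfl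
end
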